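/- Every constant-amplitude multichannel spectrally sparse signal admits a constant-amplitude Hankel–Toeplitz factorization: S_0^C ⊆ S_MF^C. -/

import Mathlib

open Matrix Complex BigOperators
open scoped ComplexOrder

noncomputable section

/-- The Hankel operator `𝓗 : ℂ^N → ℂ^{n×n}`, `N = 2n-1` (0-indexed). -/
def hk (n : ℕ) (x : Fin (2*n-1) → ℂ) : Matrix (Fin n) (Fin n) ℂ :=
  Matrix.of fun j k => x ⟨j.1 + k.1, by have h1 := j.2; have h2 := k.2; omega⟩

/-- The Toeplitz operator `𝓣 : ℂ^N → ℂ^{n×n}`, `N = 2n-1` (0-indexed). -/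
def tp (n : ℕ) (t : Fin (2*n-1) → ℂ) : Matrix (Fin n) (Fin n) ℂ :=
  Matrix.of fun j k => t ⟨n - 1 + j.1 - k.1, by have h1 := j.2; have h2 := k.2; omega⟩

/-- The steering matrix `A(f) ∈ ℂ^{N×K}` with `A(f)_{jk} = e^{-i2π f_k (j-1)}` (1-indexed). -/
def Afull (n K : ℕ) (f : Fin K → ℝ) : Matrix (Fin (2*n-1)) (Fin K) ℂ :=
  Matrix.of fun j k => Complex.exp (Complex.I * Complex.ofReal (-(2 * Real.pi * f k * (j.1 : ℝ))))

/-- The matrix `A ∈ ℂ^{n×K}` formed by the first `n` rows of `A(f)`. -/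
def An (n K : ℕ) (f : Fin K → ℝ) : Matrix (Fin n) (Fin K) ℂ :=
  Matrix.of fun j k => Afull n K f ⟨j.1, by have h1 := j.2; omega⟩ k

/-- `S_0^C`: constant-amplitude multichannel signals `X = A(f) diag(b) Φ`. -/
def S0C (n K L : ℕ) : Set (Matrix (Fin (2*n-1)) (Fin L) ℂ) :=
  {X | ∃ (f : Fin K → ℝ) (b : Fin K → ℝ) (Φ : Matrix (Fin K) (Fin L) ℂ),
    (∀ k, f k ∈ Set.Ico (0:ℝ) 1) ∧ (∀ k, 0 < b k) ∧ (∀ k l, ‖Φ k l‖ = 1) ∧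
    X = Afull n K f * Matrix.diagonal (fun k => (b k : ℂ)) * Φ}

/-- `S_HT^C`: the constant-amplitude rank-constrained PSD Hankel-Toeplitz set. -/
def SHTC (n K L : ℕ) : Set (Matrix (Fin (2*n-1)) (Fin L) ℂ) :=
  {X | ∃ (t : Fin (2*n-1) → ℂ), ∀ l,
    (Matrix.fromBlocks (tp n (fun m => star (t m))) (hk n (fun m => star (X m l)))
       (hk n (fun m => X m l)) (tp n t)).PosSemidef ∧
    (Matrix.fromBlocks (tp n (fun m => star (t m))) (hk n (fun m => star (X m l)))
       (hk n (fun m => X m l)) (tp n t)).rank ≤ K}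

/-- `S_MF^C`: the constant-amplitude Hankel-Toeplitz factorization set. -/
def SMFC (n K L : ℕ) : Set (Matrix (Fin (2*n-1)) (Fin L) ℂ) :=
  {X | ∃ (t : Fin (2*n-1) → ℂ) (Z : Fin L → Matrix (Fin n) (Fin K) ℂ),
    ∀ l, hk n (fun m => X m l) = Z l * (Z l)ᵀ ∧ tp n t = Z l * (Z l)ᴴ}


lemma exp_I_mul_add (r s : ℝ) :
    Complex.exp (Complex.I * (r : ℂ)) * Complex.exp (Complex.I * (s : ℂ))
      = Complex.exp (Complex.I * ((r + s : ℝ) : ℂ)) := by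
  rw [← Complex.exp_add]; push_cast; ring_nf

lemma conj_exp_I_mul (r : ℝ) :
    (starRingEnd ℂ) (Complex.exp (Complex.I * (r : ℂ)))
      = Complex.exp (Complex.I * ((-r : ℝ) : ℂ)) := by
  rw [← Complex.exp_conj, _root_.map_mul, Complex.conj_I, Complex.conj_ofReal]
  push_cast
  ring_nf

/-- Every constant-amplitude multichannel spectrally sparse signal admits a
constant-amplitude Hankel–Toeplitz factorization: `S_0^C ⊆ S_MF^C`. -/
theorem S0C_subset_SMFC (n K L : ℕ) (hn : 1 ≤ n) (hK : 1 ≤ K) (hL : 1 ≤ L) :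
    S0C n K L ⊆ SMFC n K L := by
  rintro X ⟨f, b, Φ, hf, hb, hΦ, rfl⟩
  choose c hc using fun k l => IsAlgClosed.exists_pow_nat_eq (Φ k l) (n := 2) (by norm_num)
  refine ⟨fun m => ∑ k, (b k : ℂ) *
      Complex.exp (Complex.I * ((-(2*Real.pi*f k*((m:ℝ) - ((n:ℝ)-1))) : ℝ) : ℂ)),
    fun l => Matrix.of fun j k => (Real.sqrt (b k) : ℂ) * c k l *
      Complex.exp (Complex.I * ((-(2*Real.pi*f k*(j:ℝ)) : ℝ) : ℂ)), fun l => ⟨?_, ?_⟩⟩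
  · ext j k
    simp only [hk, Afull, Matrix.mul_apply, Matrix.mul_diagonal, Matrix.diagonal_apply,
      Matrix.of_apply, Matrix.transpose_apply, mul_ite, ite_mul, mul_zero, zero_mul,
      Finset.sum_ite_eq, Finset.sum_ite_eq', Finset.mem_univ, if_true]
    refine Finset.sum_congr rfl fun p _ => ?_
    have hsq : (Real.sqrt (b p) : ℂ) * (Real.sqrt (b p) : ℂ) = (b p : ℂ) := by
      rw [← Complex.ofReal_mul, Real.mul_self_sqrt (hb p).le]
    have hcc : c p l * c p l = Φ p l := by rw [← sq]; exact hc p l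
    have harg : (-(2*Real.pi*f p*(j:ℝ))) + (-(2*Real.pi*f p*(k:ℝ)))
        = -(2*Real.pi*f p*(((j:ℕ)+(k:ℕ) : ℕ) : ℝ)) := by push_cast; ring
    have he := exp_I_mul_add (-(2*Real.pi*f p*(j:ℝ))) (-(2*Real.pi*f p*(k:ℝ)))
    rw [harg] at he
    set e1 := Complex.exp (Complex.I * ((-(2*Real.pi*f p*(j:ℝ)) : ℝ) : ℂ))
    set e2 := Complex.exp (Complex.I * ((-(2*Real.pi*f p*(k:ℝ)) : ℝ) : ℂ))
    set e3 := Complex.exp (Complex.I * ((-(2*Real.pi*f p*(((j:ℕ)+(k:ℕ) : ℕ) : ℝ)) : ℝ) : ℂ))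
    linear_combination (-(b p : ℂ) * Φ p l) * he - e1 * e2 * Φ p l * hsq
      - e1 * e2 * ((Real.sqrt (b p) : ℂ) * (Real.sqrt (b p) : ℂ)) * hcc
  · ext j k
    simp only [tp, Matrix.mul_apply, Matrix.of_apply, Matrix.conjTranspose_apply,
      Complex.star_def, _root_.map_mul, Complex.conj_ofReal]
    refine Finset.sum_congr rfl fun p _ => ?_
    have hsq : (Real.sqrt (b p) : ℂ) * (Real.sqrt (b p) : ℂ) = (b p : ℂ) := by
      rw [← Complex.ofReal_mul, Real.mul_self_sqrt (hb p).le]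
    have hcast : (((n - 1 + (j:ℕ) - (k:ℕ) : ℕ)) : ℝ) - ((n:ℝ) - 1) = (j:ℝ) - (k:ℝ) := by
      have h1 := j.2; have h2 := k.2
      have hk' : (k:ℕ) ≤ n - 1 + (j:ℕ) := by omega
      rw [Nat.cast_sub hk']
      push_cast [Nat.cast_sub hn]
      ring
    have hcc : c p l * (starRingEnd ℂ) (c p l) = 1 := by
      rw [Complex.mul_conj, ← Complex.ofReal_one]
      congr 1
      have : Complex.normSq (c p l) = ‖c p l ^ 2‖ := by
        rw [norm_pow, Complex.sq_norm]
      rw [this, hc, hΦ]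
    have he : Complex.exp (Complex.I * ((-(2*Real.pi*f p*(j:ℝ)) : ℝ) : ℂ)) *
        (starRingEnd ℂ) (Complex.exp (Complex.I * ((-(2*Real.pi*f p*(k:ℝ)) : ℝ) : ℂ)))
        = Complex.exp (Complex.I * ((-(2*Real.pi*f p*((((n - 1 + (j:ℕ) - (k:ℕ) : ℕ)):ℝ) - ((n:ℝ)-1))) : ℝ) : ℂ)) := by
      rw [conj_exp_I_mul, exp_I_mul_add]
      have hr : (-(2*Real.pi*f p*(j:ℝ))) + (-(-(2*Real.pi*f p*(k:ℝ))))
          = -(2*Real.pi*f p*((((n - 1 + (j:ℕ) - (k:ℕ) : ℕ)):ℝ) - ((n:ℝ)-1))) := by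
        rw [hcast]; ring
      rw [hr]
    set e1 := Complex.exp (Complex.I * ((-(2*Real.pi*f p*(j:ℝ)) : ℝ) : ℂ))
    set e2 := Complex.exp (Complex.I * ((-(2*Real.pi*f p*(k:ℝ)) : ℝ) : ℂ))
    set e3 := Complex.exp (Complex.I * ((-(2*Real.pi*f p*((((n - 1 + (j:ℕ) - (k:ℕ) : ℕ)):ℝ) - ((n:ℝ)-1))) : ℝ) : ℂ))
    linear_combination (-(b p : ℂ)) * he - e1 * (starRingEnd ℂ) e2 * hsq
      - e1 * (starRingEnd ℂ) e2 * ((Real.sqrt (b p) : ℂ) * (Real.sqrt (b p) : ℂ)) * hcc
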